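/- The number of integer triangles with perimeter n, up to congruence, is the nearest integer to n²/48 if n is even, and to (n+3)²/48 if n is odd. Equivalently, the number of triples (a, b, c) of positive integers with a ≤ b ≤ c, a + b + c = n, and a + b > c is given by this formula. -/

import Mathlib

open Finset

private def S (n : ℕ) : Finset (ℕ × ℕ × ℕ) :=
  (Finset.Icc 1 n ×ˢ Finset.Icc 1 n ×ˢ Finset.Icc 1 n).filter
    (fun t : ℕ × ℕ × ℕ =>
      t.1 ≤ t.2.1 ∧ t.2.1 ≤ t.2.2 ∧ t.1 + t.2.1 + t.2.2 = n ∧ t.2.2 < t.1 + t.2.1)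

private def S' (n : ℕ) : Finset (ℕ × ℕ × ℕ) :=
  (Finset.Icc 1 n ×ˢ Finset.Icc 1 n ×ˢ Finset.Icc 1 n).filter
    (fun t : ℕ × ℕ × ℕ =>
      t.1 ≤ t.2.1 ∧ t.2.1 ≤ t.2.2 ∧ t.1 + t.2.1 + t.2.2 = n ∧ t.2.2 ≤ t.1 + t.2.1)

private lemma mem_S {n : ℕ} {t : ℕ × ℕ × ℕ} :
    t ∈ S n ↔ 1 ≤ t.1 ∧ t.1 ≤ t.2.1 ∧ t.2.1 ≤ t.2.2 ∧ t.1 + t.2.1 + t.2.2 = n ∧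
      t.2.2 < t.1 + t.2.1 := by
  obtain ⟨a, b, c⟩ := t
  simp only [S, Finset.mem_filter, Finset.mem_product, Finset.mem_Icc]
  omega

private lemma mem_S' {n : ℕ} {t : ℕ × ℕ × ℕ} :
    t ∈ S' n ↔ 1 ≤ t.1 ∧ t.1 ≤ t.2.1 ∧ t.2.1 ≤ t.2.2 ∧ t.1 + t.2.1 + t.2.2 = n ∧
      t.2.2 ≤ t.1 + t.2.1 := by
  obtain ⟨a, b, c⟩ := t
  simp only [S', Finset.mem_filter, Finset.mem_product, Finset.mem_Icc]
  omega

private lemma card_S'_eq (n : ℕ) :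
    (S' n).card = (S n).card + (if Even n then n / 4 else 0) := by
  classical
  have hsplit := Finset.card_filter_add_card_filter_not
    (s := S' n) (p := fun t : ℕ × ℕ × ℕ => t.2.2 < t.1 + t.2.1)
  have h1 : (S' n).filter (fun t : ℕ × ℕ × ℕ => t.2.2 < t.1 + t.2.1) = S n := by
    ext t
    simp only [Finset.mem_filter, mem_S', mem_S]
    omega
  have h2 : ((S' n).filter (fun t : ℕ × ℕ × ℕ => ¬ t.2.2 < t.1 + t.2.1)).card =
      (if Even n then n / 4 else 0) := by
    split_ifs with he
    · obtain ⟨m, hm⟩ := he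
      have hicc : (Finset.Icc 1 (n / 4)).card = n / 4 := by simp
      rw [← hicc]
      apply Finset.card_nbij' (i := fun t : ℕ × ℕ × ℕ => t.1)
        (j := fun a => (a, m - a, m))
      · rintro ⟨a, b, c⟩ ht
        simp only [Finset.mem_coe, Finset.mem_filter, mem_S'] at ht
        simp only [Finset.mem_coe, Finset.mem_Icc]
        omega
      · intro a ha
        simp only [Finset.mem_coe, Finset.mem_Icc] at ha
        simp only [Finset.mem_coe, Finset.mem_filter, mem_S']
        omega
      · rintro ⟨a, b, c⟩ ht
        simp only [Finset.mem_coe, Finset.mem_filter, mem_S'] at ht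
        simp only [Prod.mk.injEq]
        refine ⟨trivial, ?_, ?_⟩ <;> omega
      · intro a _
        rfl
    · rw [Nat.not_even_iff] at he
      rw [Finset.card_eq_zero]
      ext ⟨a, b, c⟩
      simp only [Finset.mem_filter, mem_S', Finset.notMem_empty, iff_false, not_and]
      omega
  rw [← hsplit, h1, h2]

private lemma card_S_step (n : ℕ) :
    (S (n + 3)).card = (S n).card + (if Even n then n / 4 + 1 else 0) := by
  classical
  have hsplit := Finset.card_filter_add_card_filter_not
    (s := S (n + 3)) (p := fun t : ℕ × ℕ × ℕ => t.1 = 1)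
  have h1 : ((S (n + 3)).filter (fun t : ℕ × ℕ × ℕ => t.1 = 1)).card =
      (if Even n then 1 else 0) := by
    split_ifs with he
    · obtain ⟨m, hm⟩ := he
      rw [show ((S (n + 3)).filter (fun t : ℕ × ℕ × ℕ => t.1 = 1)) = {(1, m + 1, m + 1)} by
        ext ⟨a, b, c⟩
        simp only [Finset.mem_filter, mem_S, Finset.mem_singleton, Prod.mk.injEq]
        omega]
      simp
    · rw [Nat.not_even_iff] at he
      rw [Finset.card_eq_zero]
      ext ⟨a, b, c⟩
      simp only [Finset.mem_filter, mem_S, Finset.notMem_empty, iff_false, not_and]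
      omega
  have h2 : ((S (n + 3)).filter (fun t : ℕ × ℕ × ℕ => ¬ t.1 = 1)).card = (S' n).card := by
    apply Finset.card_nbij' (i := fun t : ℕ × ℕ × ℕ => (t.1 - 1, t.2.1 - 1, t.2.2 - 1))
      (j := fun t : ℕ × ℕ × ℕ => (t.1 + 1, t.2.1 + 1, t.2.2 + 1))
    · rintro ⟨a, b, c⟩ ht
      simp only [Finset.mem_coe, Finset.mem_filter, mem_S] at ht
      simp only [Finset.mem_coe, mem_S']
      omega
    · rintro ⟨a, b, c⟩ ht
      simp only [Finset.mem_coe, mem_S'] at ht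
      simp only [Finset.mem_coe, Finset.mem_filter, mem_S]
      omega
    · rintro ⟨a, b, c⟩ ht
      simp only [Finset.mem_coe, Finset.mem_filter, mem_S] at ht
      simp only [Prod.mk.injEq]
      refine ⟨?_, ?_, ?_⟩ <;> omega
    · rintro ⟨a, b, c⟩ _
      simp
  rw [← hsplit, h1, h2, card_S'_eq n]
  split_ifs <;> omega

private lemma round_div48 (k : ℤ) : round ((k : ℝ) / 48) = (k + 24) / 48 := by
  rw [round_eq, show ((k : ℝ) / 48 + 1/2) = ((((k + 24 : ℤ) : ℚ) / ((48 : ℕ) : ℚ) : ℚ) : ℝ) by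
    push_cast; ring, Rat.floor_cast, Rat.floor_intCast_div_natCast]
  norm_num

private def F (n : ℕ) : ℤ :=
  if Even n then ((n : ℤ) ^ 2 + 24) / 48 else (((n : ℤ) + 3) ^ 2 + 24) / 48

private lemma sq_mod_facts (n : ℕ) (he : Even n) :
    (n % 4 = 0 ∧ ((n : ℤ) ^ 2 % 48 = 0 ∨ (n : ℤ) ^ 2 % 48 = 16)) ∨
    (n % 4 = 2 ∧ ((n : ℤ) ^ 2 % 48 = 4 ∨ (n : ℤ) ^ 2 % 48 = 36)) := by
  have hq : (n : ℤ) = 24 * ((n / 24 : ℕ) : ℤ) + ((n % 24 : ℕ) : ℤ) := by push_cast; omega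
  have hsq : (n : ℤ) ^ 2 % 48 = ((n % 24 : ℕ) : ℤ) ^ 2 % 48 := by
    rw [hq, show (24 * ((n / 24 : ℕ) : ℤ) + ((n % 24 : ℕ) : ℤ)) ^ 2 =
      ((n % 24 : ℕ) : ℤ) ^ 2 + (12 * ((n / 24 : ℕ) : ℤ) ^ 2 + ((n / 24 : ℕ) : ℤ) *
        ((n % 24 : ℕ) : ℤ)) * 48 by ring, Int.add_mul_emod_self_right]
  rw [hsq]
  have h4 : n % 4 = (n % 24) % 4 := (Nat.mod_mod_of_dvd n (by norm_num)).symm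
  rw [h4]
  have h2 : (n % 24) % 2 = 0 := by
    obtain ⟨m, hm⟩ := he
    omega
  have hlt : n % 24 < 24 := Nat.mod_lt _ (by norm_num)
  clear hq hsq he
  set r := n % 24 with hr
  clear_value r
  interval_cases r <;> first | decide | (exact absurd h2 (by decide))

private lemma F_step (n : ℕ) :
    F (n + 3) = F n + (if Even n then ((n / 4 : ℕ) : ℤ) + 1 else 0) := by
  by_cases he : Even n
  · have ho : ¬ Even (n + 3) := by
      rw [Nat.even_iff] at he ⊢
      omega
    rw [F, F, if_pos he, if_neg ho, if_pos he]
    have hcast : ((n / 4 : ℕ) : ℤ) = (n : ℤ) / 4 := by omega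
    rw [hcast]
    have hexp : ((((n + 3 : ℕ) : ℤ)) + 3) ^ 2 + 24 = (n : ℤ) ^ 2 + (12 * (n : ℤ) + 60) := by
      push_cast; ring
    rw [hexp]
    have hfacts := sq_mod_facts n he
    have hA0 : (0 : ℤ) ≤ (n : ℤ) ^ 2 := sq_nonneg _
    obtain ⟨A, hA⟩ : ∃ A : ℤ, (n : ℤ) ^ 2 = A := ⟨_, rfl⟩
    rw [hA] at hfacts hA0 ⊢
    clear hA
    rcases hfacts with ⟨h4, h48⟩ | ⟨h4, h48⟩ <;> omega
  · have ho : Even (n + 3) := by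
      rw [Nat.even_iff] at he ⊢
      omega
    rw [F, F, if_pos ho, if_neg he, if_neg he]
    push_cast
    ring_nf

private lemma card_S_eq_F (n : ℕ) : ((S n).card : ℤ) = F n := by
  induction n using Nat.strong_induction_on with
  | _ n ih =>
    rcases n with _ | _ | _ | m
    · decide
    · decide
    · decide
    · show ((S (m + 3)).card : ℤ) = F (m + 3)
      rw [card_S_step m, F_step m, ← ih m (by omega)]
      split_ifs <;> push_cast <;> ring

theorem count_triangles_with_perimeter (n : ℕ) :
    (((Finset.Icc 1 n ×ˢ Finset.Icc 1 n ×ˢ Finset.Icc 1 n).filter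
          (fun t : ℕ × ℕ × ℕ =>
            t.1 ≤ t.2.1 ∧ t.2.1 ≤ t.2.2 ∧ t.1 + t.2.1 + t.2.2 = n ∧
              t.2.2 < t.1 + t.2.1)).card : ℤ) =
      if Even n then round ((n : ℝ) ^ 2 / 48) else round (((n : ℝ) + 3) ^ 2 / 48) := by
  have h := card_S_eq_F n
  rw [S] at h
  rw [h, F]
  split_ifs
  · rw [show ((n : ℝ) ^ 2 / 48) = (((n : ℤ) ^ 2 : ℤ) : ℝ) / 48 by push_cast; ring, round_div48]
  · rw [show (((n : ℝ) + 3) ^ 2 / 48) = ((((n : ℤ) + 3) ^ 2 : ℤ) : ℝ) / 48 by push_cast; ring,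
      round_div48]
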